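/- For all nonzero real numbers g_l and g_s and every admissible function N for Δ(B_2), there exists no function F : Δ(B_2) → ℝ² such that 2·g(β)·⟨β, F(α)⟩ = Γ_{g,N}(β,α) + Γ_{g,N}(β,−α) for all α, β ∈ Δ(B_2), where g(β) = g_l if β is one of the long roots ±e_1 ± e_2 and g(β) = g_s if β is one of the short roots ±e_1, ±e_2. (This is the key nonexistence result behind Theorem 2.2 for the rank-two Lie algebra so(5,ℂ) ≅ sp(4,ℂ), i.e. B_2 = C_2.) -/

import Mathlib

open scoped RealInnerProductSpace

/-- The standard basis vector `e_k` of `ℝ²`. -/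
noncomputable def eVec2 (k : Fin 2) : EuclideanSpace ℝ (Fin 2) :=
  EuclideanSpace.single k 1

/-- The root system of type `B_2`: the long roots `±e_1 ± e_2` and the
short roots `±e_1, ±e_2`. -/
def DeltaB2 : Set (EuclideanSpace ℝ (Fin 2)) :=
  {v | ∃ s : ℝ, (s = 1 ∨ s = -1) ∧
      (v = s • eVec2 0 ∨ v = s • eVec2 1 ∨
       v = s • (eVec2 0 + eVec2 1) ∨ v = s • (eVec2 0 - eVec2 1))}

lemma eVec2_apply (k j : Fin 2) : eVec2 k j = if j = k then 1 else 0 := by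
  simp [eVec2, EuclideanSpace.single_apply]

lemma notmem (v : EuclideanSpace ℝ (Fin 2)) (h0 h1 : ℝ) (hv0 : v 0 = h0) (hv1 : v 1 = h1)
    (H : ∀ s : ℝ, (s = 1 ∨ s = -1) →
      ¬(h0 = s ∧ h1 = 0) ∧ ¬(h0 = 0 ∧ h1 = s) ∧ ¬(h0 = s ∧ h1 = s) ∧ ¬(h0 = s ∧ h1 = -s)) :
    v ∉ DeltaB2 := by
  rintro ⟨s, hs, h | h | h | h⟩ <;>
  · obtain ⟨H1, H2, H3, H4⟩ := H s hs
    have c0 := congrArg (fun w : EuclideanSpace ℝ (Fin 2) => w 0) h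
    have c1 := congrArg (fun w : EuclideanSpace ℝ (Fin 2) => w 1) h
    simp [eVec2_apply, hv0, hv1] at c0 c1
    tauto

theorem stmt_9 (gl gs : ℝ) (hgl : gl ≠ 0) (hgs : gs ≠ 0)
    (N : EuclideanSpace ℝ (Fin 2) → EuclideanSpace ℝ (Fin 2) → ℝ)
    (hN : ∀ α ∈ DeltaB2, ∀ β ∈ DeltaB2, (N β α ≠ 0 ↔ β + α ∈ DeltaB2))
    (g : EuclideanSpace ℝ (Fin 2) → ℝ)
    (hglong : ∀ s t : ℝ, (s = 1 ∨ s = -1) → (t = 1 ∨ t = -1) →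
      g (s • eVec2 0 + t • eVec2 1) = gl)
    (hgshort : ∀ s : ℝ, (s = 1 ∨ s = -1) → g (s • eVec2 0) = gs ∧ g (s • eVec2 1) = gs)
    (Γ : EuclideanSpace ℝ (Fin 2) → EuclideanSpace ℝ (Fin 2) → ℝ)
    (hΓ : ∀ β α : EuclideanSpace ℝ (Fin 2),
      (β + α ∈ DeltaB2 → Γ β α = g (β + α) * N β α) ∧ (β + α ∉ DeltaB2 → Γ β α = 0)) :
    ¬ ∃ F : EuclideanSpace ℝ (Fin 2) → EuclideanSpace ℝ (Fin 2),
        ∀ α ∈ DeltaB2, ∀ β ∈ DeltaB2, 2 * g β * ⟪β, F α⟫ = Γ β α + Γ β (-α) := by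
  rintro ⟨F, hF⟩
  set a : EuclideanSpace ℝ (Fin 2) := eVec2 0 + eVec2 1 with ha
  set b : EuclideanSpace ℝ (Fin 2) := eVec2 0 - eVec2 1 with hb
  have ea : ∀ j, a j = if j = 0 then 1 else 1 := by
    intro j; fin_cases j <;> simp [ha, eVec2_apply]
  have eb : ∀ j, b j = if j = 0 then 1 else -1 := by
    intro j; fin_cases j <;> simp [hb, eVec2_apply]
  have hamem : a ∈ DeltaB2 := ⟨1, Or.inl rfl, Or.inr (Or.inr (Or.inl (one_smul ℝ a).symm))⟩
  have hnamem : -a ∈ DeltaB2 :=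
    ⟨-1, Or.inr rfl, Or.inr (Or.inr (Or.inl (by module)))⟩
  have hbmem : b ∈ DeltaB2 := ⟨1, Or.inl rfl, Or.inr (Or.inr (Or.inr (one_smul ℝ b).symm))⟩
  have he0mem : eVec2 0 ∈ DeltaB2 := ⟨1, Or.inl rfl, Or.inl (one_smul ℝ _).symm⟩
  have hga : g a = gl := by
    have := hglong 1 1 (Or.inl rfl) (Or.inl rfl)
    simpa [ha] using this
  have hgb : g b = gl := by
    have := hglong 1 (-1) (Or.inl rfl) (Or.inr rfl)
    have e : (1:ℝ) • eVec2 0 + (-1:ℝ) • eVec2 1 = b := by module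
    rwa [e] at this
  -- ⟪a, F a⟫ = 0
  have n1 : a + a ∉ DeltaB2 := by
    refine notmem _ 2 2 (by norm_num [ea]) (by norm_num [ea]) ?_
    rintro s (rfl | rfl) <;> norm_num
  have n2 : a + -a ∉ DeltaB2 := by
    refine notmem _ 0 0 (by simp) (by simp) ?_
    rintro s (rfl | rfl) <;> norm_num
  have E1 := hF a hamem a hamem
  rw [(hΓ a a).2 n1, (hΓ a (-a)).2 n2, hga] at E1
  have ia : ⟪a, F a⟫ = 0 := by
    rcases mul_eq_zero.mp (by linarith : (2 * gl) * ⟪a, F a⟫ = 0) with h | h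
    · exact absurd h (mul_ne_zero two_ne_zero hgl)
    · exact h
  -- ⟪b, F a⟫ = 0
  have n3 : b + a ∉ DeltaB2 := by
    refine notmem _ 2 0 (by norm_num [ea, eb]) (by norm_num [ea, eb]) ?_
    rintro s (rfl | rfl) <;> norm_num
  have n4 : b + -a ∉ DeltaB2 := by
    refine notmem _ 0 (-2) (by norm_num [ea, eb]) (by norm_num [ea, eb]) ?_
    rintro s (rfl | rfl) <;> norm_num
  have E2 := hF a hamem b hbmem
  rw [(hΓ b a).2 n3, (hΓ b (-a)).2 n4, hgb] at E2
  have ib : ⟪b, F a⟫ = 0 := by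
    rcases mul_eq_zero.mp (by linarith : (2 * gl) * ⟪b, F a⟫ = 0) with h | h
    · exact absurd h (mul_ne_zero two_ne_zero hgl)
    · exact h
  -- ⟪e0, F a⟫ = 0
  have ie0 : ⟪eVec2 0, F a⟫ = 0 := by
    have h2 : ⟪a, F a⟫ + ⟪b, F a⟫ = 2 * ⟪eVec2 0, F a⟫ := by
      rw [ha, hb, inner_add_left, inner_sub_left]; ring
    rw [ia, ib] at h2; linarith
  -- the contradiction
  have n5 : eVec2 0 + a ∉ DeltaB2 := by
    refine notmem _ 2 1 (by norm_num [ea, eVec2_apply]) (by norm_num [ea, eVec2_apply]) ?_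
    rintro s (rfl | rfl) <;> norm_num
  have m6 : eVec2 0 + -a ∈ DeltaB2 :=
    ⟨-1, Or.inr rfl, Or.inr (Or.inl (by module))⟩
  have hgne1 : g (eVec2 0 + -a) = gs := by
    have := (hgshort (-1) (Or.inr rfl)).2
    have e : (-1:ℝ) • eVec2 1 = eVec2 0 + -a := by module
    rwa [e] at this
  have hNne : N (eVec2 0) (-a) ≠ 0 := (hN (-a) hnamem (eVec2 0) he0mem).mpr m6
  have E3 := hF a hamem (eVec2 0) he0mem
  rw [(hΓ (eVec2 0) a).2 n5, (hΓ (eVec2 0) (-a)).1 m6, hgne1, ie0] at E3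
  have : gs * N (eVec2 0) (-a) = 0 := by linarith
  rcases mul_eq_zero.mp this with h | h
  · exact hgs h
  · exact hNne h
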